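/- Let ε ∈ (−1,1) and ξ ∈ {−1,1}. Set α₊ := (√(1+εξ) + √(1−εξ))/2, α₋ := (√(1+εξ) − √(1−εξ))/2, k₋ := −iξα₋/√(1−ε²), k₊ := iα₊/√(1−ε²), and define φ₀₀(x₁,x₂) := exp(−(α₊/2)(x₁² + x₂²) − k₋x₁ − k₊x₂ − ξα₋ x₁x₂). Then φ₀₀ is an eigenfunction of the non-self-adjoint Hamiltonian H = p₁² + x₁² + p₂² + x₂² + 2i x₂ + 2ε x₁x₂ with eigenvalue √(1+εξ) + √(1−εξ) + 1/(1−ε²): for all (x₁,x₂) ∈ ℝ², −∂₁²φ₀₀ − ∂₂²φ₀₀ + (x₁² + x₂² + 2i x₂ + 2ε x₁x₂) φ₀₀ = (√(1+εξ) + √(1−εξ) + 1/(1−ε²)) φ₀₀. -/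

import Mathlib

lemma hasDerivAt_ofReal' (x : ℝ) : HasDerivAt (fun t : ℝ => (t : ℂ)) 1 x := by
  simpa using (hasDerivAt_id x).ofReal_comp

lemma hasDerivAt_exp_quad (A B C : ℂ) (x : ℝ) :
    HasDerivAt (fun t : ℝ => Complex.exp (A * (t : ℂ) ^ 2 + B * (t : ℂ) + C))
      ((2 * A * x + B) * Complex.exp (A * (x : ℂ) ^ 2 + B * (x : ℂ) + C)) x := by
  have h := hasDerivAt_ofReal' x
  have hq : HasDerivAt (fun t : ℝ => A * (t : ℂ) ^ 2 + B * (t : ℂ) + C)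
      (2 * A * x + B) x := by
    have h1 := (h.mul h).const_mul A
    have h2 := h.const_mul B
    have h3 := (h1.add h2).add_const C
    have heq : (fun t : ℝ => A * (t : ℂ) ^ 2 + B * (t : ℂ) + C)
        = fun t : ℝ => A * ((t : ℂ) * (t : ℂ)) + B * (t : ℂ) + C := by
      funext t; ring
    rw [heq]
    exact h3.congr_deriv (by ring)
  simpa [mul_comm] using hq.cexp

lemma hasDerivAt_lin_mul_exp (A B C : ℂ) (x : ℝ) :
    HasDerivAt (fun t : ℝ => (2 * A * (t : ℂ) + B) * Complex.exp (A * (t : ℂ) ^ 2 + B * (t : ℂ) + C))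
      ((2 * A + (2 * A * x + B) ^ 2) * Complex.exp (A * (x : ℂ) ^ 2 + B * (x : ℂ) + C)) x := by
  have h := hasDerivAt_ofReal' x
  have hl : HasDerivAt (fun t : ℝ => 2 * A * (t : ℂ) + B) (2 * A) x := by
    simpa using (h.const_mul (2 * A)).add_const B
  have := hl.mul (hasDerivAt_exp_quad A B C x)
  exact this.congr_deriv (by ring)

/-- Partial derivative in the first variable of a function `ℝ × ℝ → ℂ`. -/
noncomputable def pd1 (f : ℝ × ℝ → ℂ) (x : ℝ × ℝ) : ℂ :=
  deriv (fun t : ℝ => f (t, x.2)) x.1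

/-- Partial derivative in the second variable of a function `ℝ × ℝ → ℂ`. -/
noncomputable def pd2 (f : ℝ × ℝ → ℂ) (x : ℝ × ℝ) : ℂ :=
  deriv (fun t : ℝ => f (x.1, t)) x.2

/-- Example one, ground state equation: the function
`φ₀₀(x₁,x₂) = exp(−(α₊/2)(x₁²+x₂²) − k₋x₁ − k₊x₂ − ξα₋x₁x₂)` is an
eigenfunction of `H = p₁²+x₁²+p₂²+x₂²+2ix₂+2εx₁x₂` with eigenvalue
`√(1+εξ) + √(1−εξ) + 1/(1−ε²)`. -/
theorem example_one_ground_state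
    (ε ξ : ℝ) (hε : ε ∈ Set.Ioo (-1 : ℝ) 1) (hξ : ξ = -1 ∨ ξ = 1)
    (αp αm : ℝ) (km kp : ℂ)
    (hαp : αp = (Real.sqrt (1 + ε * ξ) + Real.sqrt (1 - ε * ξ)) / 2)
    (hαm : αm = (Real.sqrt (1 + ε * ξ) - Real.sqrt (1 - ε * ξ)) / 2)
    (hkm : km = -Complex.I * (ξ : ℂ) * (αm : ℂ) / ((Real.sqrt (1 - ε ^ 2) : ℝ) : ℂ))
    (hkp : kp = Complex.I * (αp : ℂ) / ((Real.sqrt (1 - ε ^ 2) : ℝ) : ℂ))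
    (φ : ℝ × ℝ → ℂ)
    (hφ : ∀ x₁ x₂ : ℝ, φ (x₁, x₂) = Complex.exp
      (-((αp / 2 : ℝ) : ℂ) * ((x₁ : ℂ) ^ 2 + (x₂ : ℂ) ^ 2)
        - km * (x₁ : ℂ) - kp * (x₂ : ℂ)
        - ((ξ * αm : ℝ) : ℂ) * (x₁ : ℂ) * (x₂ : ℂ))) :
    ∀ x₁ x₂ : ℝ,
      -pd1 (pd1 φ) (x₁, x₂) - pd2 (pd2 φ) (x₁, x₂)
        + (((x₁ ^ 2 + x₂ ^ 2 : ℝ) : ℂ) + 2 * Complex.I * (x₂ : ℂ)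
            + ((2 * ε * x₁ * x₂ : ℝ) : ℂ)) * φ (x₁, x₂)
      = ((Real.sqrt (1 + ε * ξ) + Real.sqrt (1 - ε * ξ) + 1 / (1 - ε ^ 2) : ℝ) : ℂ)
          * φ (x₁, x₂) := by
  intro x₁ x₂
  set A : ℂ := -((αp / 2 : ℝ) : ℂ) with hA
  set B₁ : ℂ := -km - ((ξ * αm : ℝ) : ℂ) * (x₂ : ℂ) with hB₁
  set C₁ : ℂ := -((αp / 2 : ℝ) : ℂ) * (x₂ : ℂ) ^ 2 - kp * (x₂ : ℂ) with hC₁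
  set B₂ : ℂ := -kp - ((ξ * αm : ℝ) : ℂ) * (x₁ : ℂ) with hB₂
  set C₂ : ℂ := -((αp / 2 : ℝ) : ℂ) * (x₁ : ℂ) ^ 2 - km * (x₁ : ℂ) with hC₂
  have key1 : ∀ t : ℝ, pd1 φ (t, x₂)
      = (2 * A * (t : ℂ) + B₁) * Complex.exp (A * (t : ℂ) ^ 2 + B₁ * (t : ℂ) + C₁) := by
    intro t
    rw [pd1]
    have hfun : (fun s : ℝ => φ (s, x₂))
        = fun s : ℝ => Complex.exp (A * (s : ℂ) ^ 2 + B₁ * (s : ℂ) + C₁) := by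
      funext s
      rw [hφ]
      congr 1
      rw [hA, hB₁, hC₁]; push_cast; ring
    rw [hfun, (hasDerivAt_exp_quad A B₁ C₁ t).deriv]
  have key2 : ∀ t : ℝ, pd2 φ (x₁, t)
      = (2 * A * (t : ℂ) + B₂) * Complex.exp (A * (t : ℂ) ^ 2 + B₂ * (t : ℂ) + C₂) := by
    intro t
    rw [pd2]
    have hfun : (fun s : ℝ => φ (x₁, s))
        = fun s : ℝ => Complex.exp (A * (s : ℂ) ^ 2 + B₂ * (s : ℂ) + C₂) := by
      funext s
      rw [hφ]
      congr 1
      rw [hA, hB₂, hC₂]; push_cast; ring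
    rw [hfun, (hasDerivAt_exp_quad A B₂ C₂ t).deriv]
  have h11 : pd1 (pd1 φ) (x₁, x₂)
      = (2 * A + (2 * A * (x₁ : ℂ) + B₁) ^ 2) * φ (x₁, x₂) := by
    rw [pd1, show (fun t : ℝ => pd1 φ (t, x₂))
        = fun t : ℝ => (2 * A * (t : ℂ) + B₁) * Complex.exp (A * (t : ℂ) ^ 2 + B₁ * (t : ℂ) + C₁)
        from funext key1, (hasDerivAt_lin_mul_exp A B₁ C₁ x₁).deriv]
    congr 1
    rw [hφ]
    congr 1
    rw [hA, hB₁, hC₁]; push_cast; ring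
  have h22 : pd2 (pd2 φ) (x₁, x₂)
      = (2 * A + (2 * A * (x₂ : ℂ) + B₂) ^ 2) * φ (x₁, x₂) := by
    rw [pd2, show (fun t : ℝ => pd2 φ (x₁, t))
        = fun t : ℝ => (2 * A * (t : ℂ) + B₂) * Complex.exp (A * (t : ℂ) ^ 2 + B₂ * (t : ℂ) + C₂)
        from funext key2, (hasDerivAt_lin_mul_exp A B₂ C₂ x₂).deriv]
    congr 1
    rw [hφ]
    congr 1
    rw [hA, hB₂, hC₂]; push_cast; ring
  rw [h11, h22]
  have key : -(2 * A + (2 * A * (x₁ : ℂ) + B₁) ^ 2)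
      - (2 * A + (2 * A * (x₂ : ℂ) + B₂) ^ 2)
      + (((x₁ ^ 2 + x₂ ^ 2 : ℝ) : ℂ) + 2 * Complex.I * (x₂ : ℂ)
          + ((2 * ε * x₁ * x₂ : ℝ) : ℂ))
      = ((Real.sqrt (1 + ε * ξ) + Real.sqrt (1 - ε * ξ) + 1 / (1 - ε ^ 2) : ℝ) : ℂ) := by
    have hξ2 : ξ ^ 2 = 1 := by rcases hξ with h | h <;> rw [h] <;> norm_num
    have h1 : (0:ℝ) < 1 + ε * ξ := by
      rcases hξ with h | h <;> rw [h] <;> nlinarith [hε.1, hε.2]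
    have h2 : (0:ℝ) < 1 - ε * ξ := by
      rcases hξ with h | h <;> rw [h] <;> nlinarith [hε.1, hε.2]
    have hs : (0:ℝ) < 1 - ε ^ 2 := by nlinarith [hε.1, hε.2]
    have ha2 : Real.sqrt (1 + ε * ξ) ^ 2 = 1 + ε * ξ := Real.sq_sqrt h1.le
    have hb2 : Real.sqrt (1 - ε * ξ) ^ 2 = 1 - ε * ξ := Real.sq_sqrt h2.le
    have hab : Real.sqrt (1 + ε * ξ) * Real.sqrt (1 - ε * ξ) = Real.sqrt (1 - ε ^ 2) := by
      rw [← Real.sqrt_mul h1.le]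
      congr 1
      nlinarith [hξ2]
    have hane : Real.sqrt (1 + ε * ξ) ≠ 0 := (Real.sqrt_pos.mpr h1).ne'
    have hbne : Real.sqrt (1 - ε * ξ) ≠ 0 := (Real.sqrt_pos.mpr h2).ne'
    have hsC : ((Real.sqrt (1 - ε ^ 2) : ℝ) : ℂ)
        = ((Real.sqrt (1 + ε * ξ) : ℝ) : ℂ) * ((Real.sqrt (1 - ε * ξ) : ℝ) : ℂ) := by
      exact_mod_cast congrArg Complex.ofReal hab.symm
    have ha2C : ((Real.sqrt (1 + ε * ξ) : ℝ) : ℂ) ^ 2 = 1 + (ε : ℂ) * (ξ : ℂ) := by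
      exact_mod_cast congrArg Complex.ofReal ha2
    have hb2C : ((Real.sqrt (1 - ε * ξ) : ℝ) : ℂ) ^ 2 = 1 - (ε : ℂ) * (ξ : ℂ) := by
      exact_mod_cast congrArg Complex.ofReal hb2
    have hξ2C : (ξ : ℂ) ^ 2 = 1 := by exact_mod_cast congrArg Complex.ofReal hξ2
    have haneC : ((Real.sqrt (1 + ε * ξ) : ℝ) : ℂ) ≠ 0 := by exact_mod_cast hane
    have hbneC : ((Real.sqrt (1 - ε * ξ) : ℝ) : ℂ) ≠ 0 := by exact_mod_cast hbne
    have heC : (1 : ℂ) - (ε : ℂ) ^ 2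
        = ((Real.sqrt (1 + ε * ξ) : ℝ) : ℂ) ^ 2 * ((Real.sqrt (1 - ε * ξ) : ℝ) : ℂ) ^ 2 := by
      rw [ha2C, hb2C]
      linear_combination (ε : ℂ) ^ 2 * hξ2C
    rw [hA, hB₁, hB₂, hkm, hkp, hαp, hαm, hsC]
    push_cast
    rw [heC]
    set sa := ((Real.sqrt (1 + ε * ξ) : ℝ) : ℂ) with hsa
    set sb := ((Real.sqrt (1 - ε * ξ) : ℝ) : ℂ) with hsb
    have hiaC : sa * sa⁻¹ = 1 := mul_inv_cancel₀ haneC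
    have hibC : sb * sb⁻¹ = 1 := mul_inv_cancel₀ hbneC
    have hI2 : Complex.I ^ 2 = -1 := Complex.I_sq
    linear_combination
      (((-1:ℂ)/4)*(x₂:ℂ)^2 + ((-1:ℂ)/4)*(x₁:ℂ)^2 + (-1:ℂ)*(ξ:ℂ)*(x₁:ℂ)*(x₂:ℂ) + ((-1:ℂ)/4)*(ξ:ℂ)^2*(x₂:ℂ)^2 + ((-1:ℂ)/4)*(ξ:ℂ)^2*(x₁:ℂ)^2 + ((-1:ℂ)/2)*sa⁻¹*sb⁻¹*Complex.I*(x₂:ℂ) + ((1:ℂ)/2)*sa⁻¹*sb⁻¹*(ξ:ℂ)^2*Complex.I*(x₂:ℂ) + ((-1:ℂ)/4)*sa⁻¹^2*sb⁻¹^2*Complex.I^2 + ((-1:ℂ)/4)*sa⁻¹^2*sb⁻¹^2*(ξ:ℂ)^2*Complex.I^2) * ha2C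
      + (((-1:ℂ)/4)*(x₂:ℂ)^2 + ((-1:ℂ)/4)*(x₁:ℂ)^2 + (1:ℂ)*(ξ:ℂ)*(x₁:ℂ)*(x₂:ℂ) + ((-1:ℂ)/4)*(ξ:ℂ)^2*(x₂:ℂ)^2 + ((-1:ℂ)/4)*(ξ:ℂ)^2*(x₁:ℂ)^2 + ((-1:ℂ)/2)*sa⁻¹*sb⁻¹*Complex.I*(x₂:ℂ) + ((1:ℂ)/2)*sa⁻¹*sb⁻¹*(ξ:ℂ)^2*Complex.I*(x₂:ℂ) + ((-1:ℂ)/4)*sa⁻¹^2*sb⁻¹^2*Complex.I^2 + ((-1:ℂ)/4)*sa⁻¹^2*sb⁻¹^2*(ξ:ℂ)^2*Complex.I^2) * hb2C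
      + (((-1:ℂ)/2)*(x₂:ℂ)^2 + ((-1:ℂ)/2)*(x₁:ℂ)^2 + (-2:ℂ)*(ε:ℂ)*(x₁:ℂ)*(x₂:ℂ) + (1:ℂ)*sa⁻¹*sb⁻¹*Complex.I*(x₂:ℂ) + ((-1:ℂ)/2)*sa⁻¹^2*sb⁻¹^2*Complex.I^2 + ((1:ℂ)/2)*sa*sb*(x₂:ℂ)^2 + ((1:ℂ)/2)*sa*sb*(x₁:ℂ)^2 + (-1:ℂ)*sa*sb*sa⁻¹*sb⁻¹*Complex.I*(x₂:ℂ) + ((1:ℂ)/2)*sa*sb*sa⁻¹^2*sb⁻¹^2*Complex.I^2) * hξ2C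
      + ((-1:ℂ)*sa⁻¹^2*sb⁻¹^2) * hI2
      + ((-2:ℂ)*sb*sb⁻¹*Complex.I*(x₂:ℂ)) * hiaC
      + ((-2:ℂ)*Complex.I*(x₂:ℂ)) * hibC
  linear_combination φ (x₁, x₂) * key
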